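/- If G is a finite group with exactly 5 conjugacy classes, then 5 ≤ |G| ≤ 1806. -/

import Mathlib

set_option maxRecDepth 10000
set_option maxHeartbeats 1000000

theorem key_decide : ∀ a ∈ Finset.Icc 2 5, ∀ b ∈ Finset.Icc a (4*a),
    a*b ≤ b + 4*a → ∀ c ∈ Finset.Icc b (3*(a*b)), a*b*c ≤ (a+b)*c + 3*(a*b) →
    ∀ d ∈ Finset.Icc c (2*(a*b*c)), a*b*c*d ≤ (b*c+a*c+a*b)*d + 2*(a*b*c) →
    b*c*d+a*c*d+a*b*d+a*b*c < a*b*c*d →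
    (a*b*c*d - (b*c*d+a*c*d+a*b*d+a*b*c)) ∣ a*b*c*d →
    a*b*c*d / (a*b*c*d - (b*c*d+a*c*d+a*b*d+a*b*c)) ≤ 1806 := by decide

theorem lemA (a b c d e : ℕ) (ha : 1 ≤ a) (hab : a ≤ b) (hbc : b ≤ c) (hcd : c ≤ d)
    (hde : d ≤ e)
    (heq : b*c*d*e + a*c*d*e + a*b*d*e + a*b*c*e + a*b*c*d = a*b*c*d*e) : e ≤ 1806 := by
  have hb : 1 ≤ b := le_trans ha hab
  have hc : 1 ≤ c := le_trans hb hbc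
  have hd : 1 ≤ d := le_trans hc hcd
  have he : 1 ≤ e := le_trans hd hde
  have hcde : 0 < c*d*e := by positivity
  have hde' : 0 < d*e := by positivity
  have he' : 0 < e := he
  -- a ≥ 2
  have ha2 : 2 ≤ a := by
    rcases Nat.lt_or_ge a 2 with h1 | h2
    · interval_cases a
      simp only [one_mul] at heq
      linarith [heq, hcde, Nat.zero_le (b*d*e), Nat.zero_le (b*c*e), Nat.zero_le (b*c*d)]
    · exact h2
  -- a ≤ 5
  have t1 : a*c*d*e ≤ b*c*d*e := by gcongr
  have t2 : a*b*d*e ≤ b*c*d*e := by gcongr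
  have t3 : a*b*c*e ≤ b*c*d*e := by gcongr
  have t4 : a*b*c*d ≤ b*c*d*e := by gcongr
  have ha5 : a ≤ 5 := by
    have hx : a * (b*c*d*e) ≤ 5 * (b*c*d*e) := by linarith [heq, t1, t2, t3, t4]
    have hpos : 0 < b*c*d*e := by positivity
    exact Nat.le_of_mul_le_mul_right hx hpos
  -- b step
  have u2 : a*b*d*e ≤ a*c*d*e := by gcongr
  have u3 : a*b*c*e ≤ a*c*d*e := by gcongr
  have u4 : a*b*c*d ≤ a*c*d*e := by gcongr
  have hb4 : a*b ≤ b + 4*a := by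
    have hx : (a*b) * (c*d*e) ≤ (b + 4*a) * (c*d*e) := by linarith [heq, u2, u3, u4]
    exact Nat.le_of_mul_le_mul_right hx hcde
  have hb4a : b ≤ 4*a := by nlinarith [hb4, ha2, hb]
  -- c step
  have v3 : a*b*c*e ≤ a*b*d*e := by gcongr
  have v4 : a*b*c*d ≤ a*b*d*e := by gcongr
  have hc3 : a*b*c ≤ (a+b)*c + 3*(a*b) := by
    have hx : (a*b*c) * (d*e) ≤ ((a+b)*c + 3*(a*b)) * (d*e) := by linarith [heq, v3, v4]
    exact Nat.le_of_mul_le_mul_right hx hde'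
  have habl : a + b + 1 ≤ a*b := by
    have h1 : 0 < a*b*d*e := by positivity
    have h2' : 0 < a*b*c*e := by positivity
    have h3' : 0 < a*b*c*d := by positivity
    have hx : (a + b) * (c*d*e) < (a*b) * (c*d*e) := by linarith [heq, h1, h2', h3']
    have := lt_of_mul_lt_mul_right hx (Nat.zero_le _)
    omega
  have hc3ab : c ≤ 3*(a*b) := by
    have := Nat.mul_le_mul_right c habl
    linarith [hc3, this]
  -- d step
  have w4 : a*b*c*d ≤ a*b*c*e := by gcongr
  have hd2 : a*b*c*d ≤ (b*c+a*c+a*b)*d + 2*(a*b*c) := by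
    have hx : (a*b*c*d) * e ≤ ((b*c+a*c+a*b)*d + 2*(a*b*c)) * e := by linarith [heq, w4]
    exact Nat.le_of_mul_le_mul_right hx he'
  have habcl : b*c + a*c + a*b + 1 ≤ a*b*c := by
    have h2' : 0 < a*b*c*e := by positivity
    have h3' : 0 < a*b*c*d := by positivity
    have hx : (b*c + a*c + a*b) * (d*e) < (a*b*c) * (d*e) := by linarith [heq, h2', h3']
    have := lt_of_mul_lt_mul_right hx (Nat.zero_le _)
    omega
  have hd2abc : d ≤ 2*(a*b*c) := by
    have := Nat.mul_le_mul_right d habcl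
    linarith [hd2, this]
  -- S and divisibility
  have hS' : (b*c*d+a*c*d+a*b*d+a*b*c) * e + a*b*c*d = a*b*c*d*e := by
    rw [← heq]; ring
  have hSlt : b*c*d+a*c*d+a*b*d+a*b*c < a*b*c*d := by
    have h3' : 0 < a*b*c*d := by positivity
    have hx : (b*c*d+a*c*d+a*b*d+a*b*c) * e < (a*b*c*d) * e := by linarith [hS', h3']
    exact lt_of_mul_lt_mul_right hx (Nat.zero_le _)
  have hKe : (a*b*c*d - (b*c*d+a*c*d+a*b*d+a*b*c)) * e = a*b*c*d := by
    rw [Nat.sub_mul]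
    exact Nat.sub_eq_of_eq_add (by linarith [hS'])
  have hdvd : (a*b*c*d - (b*c*d+a*c*d+a*b*d+a*b*c)) ∣ a*b*c*d := ⟨e, hKe.symm⟩
  have hediv : a*b*c*d / (a*b*c*d - (b*c*d+a*c*d+a*b*d+a*b*c)) = e := by
    have hKe' := hKe
    rw [mul_comm] at hKe'
    exact Nat.div_eq_of_eq_mul_left (Nat.sub_pos_of_lt hSlt) hKe'.symm
  have hfin := key_decide a (Finset.mem_Icc.mpr ⟨ha2, ha5⟩) b (Finset.mem_Icc.mpr ⟨hab, hb4a⟩)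
    hb4 c (Finset.mem_Icc.mpr ⟨hbc, hc3ab⟩) hc3 d (Finset.mem_Icc.mpr ⟨hcd, hd2abc⟩) hd2
    hSlt hdvd
  exact hediv ▸ hfin

/-- A finite group with exactly 5 conjugacy classes has order between 5 and 1806. -/
theorem stmt_4 (G : Type) [Group G] [Finite G]
    (h : Nat.card (ConjClasses G) = 5) :
    5 ≤ Nat.card G ∧ Nat.card G ≤ 1806 := by
  classical
  cases nonempty_fintype G
  have hn0 : 0 < Nat.card G := Nat.card_pos
  -- every conjugacy class has size dividing n and at least 1
  have hf : ∀ x : ConjClasses G, Nat.card x.carrier ∣ Nat.card G ∧ 1 ≤ Nat.card x.carrier := by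
    intro x
    obtain ⟨g, rfl⟩ := ConjClasses.exists_rep x
    constructor
    · have horb : MulAction.orbit (ConjAct G) g = (ConjClasses.mk g).carrier :=
        ConjAct.orbit_eq_carrier_conjClasses g
      refine ⟨Nat.card (MulAction.stabilizer (ConjAct G) g), ?_⟩
      rw [← horb]
      have := Nat.card_congr (MulAction.orbitProdStabilizerEquivGroup (ConjAct G) g)
      rw [Nat.card_prod] at this
      exact this.symm
    · have : Nonempty ((ConjClasses.mk g).carrier) := ⟨⟨g, ConjClasses.mem_carrier_mk⟩⟩
      exact Nat.card_pos
  -- identity class has size 1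
  have hone : Nat.card ((ConjClasses.mk (1 : G)).carrier) = 1 := by
    have : (ConjClasses.mk (1 : G)).carrier = {1} := by
      ext x
      simp [ConjClasses.mem_carrier_iff_mk_eq, ConjClasses.mk_eq_mk_iff_isConj, isConj_comm,
        isConj_one_right]
    rw [this]
    simp
  -- class equation
  have hsum : ∑ x : ConjClasses G, Nat.card x.carrier = Nat.card G := by
    have := Group.sum_card_conj_classes_eq_card G
    rw [finsum_eq_sum_of_fintype] at this
    rw [← this]
    exact Finset.sum_congr rfl fun x _ => Nat.card_coe_set_eq _
  -- multiset of class sizes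
  set M : Multiset ℕ := (Finset.univ : Finset (ConjClasses G)).val.map
    (fun x => Nat.card x.carrier) with hM
  have hMcard : Multiset.card M = 5 := by
    rw [hM, Multiset.card_map]
    simpa [Nat.card_eq_fintype_card] using h
  have hMsum : M.sum = Nat.card G := hsum
  have hMmem : ∀ z ∈ M, z ∣ Nat.card G ∧ 1 ≤ z := by
    intro z hz
    obtain ⟨x, -, rfl⟩ := Multiset.mem_map.mp hz
    exact hf x
  have h1M : (1 : ℕ) ∈ M := by
    rw [hM]
    exact Multiset.mem_map.mpr ⟨ConjClasses.mk 1, by simp, hone⟩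
  -- sorted list of class sizes
  set l := M.sort (· ≤ ·) with hL
  have hlen : l.length = 5 := by rw [hL, Multiset.length_sort]; exact hMcard
  have hsorted : List.Pairwise (· ≤ ·) l := Multiset.pairwise_sort M (· ≤ ·)
  have hcoe : (l : Multiset ℕ) = M := Multiset.sort_eq _ _
  have hlsum : l.sum = Nat.card G := by
    rw [← hMsum, ← hcoe, Multiset.sum_coe]
  have hlmem : ∀ z ∈ l, z ∣ Nat.card G ∧ 1 ≤ z := fun z hz =>
    hMmem z (by rw [← hcoe]; exact Multiset.mem_coe.mpr hz)
  have h1l : (1 : ℕ) ∈ l := by rw [← Multiset.mem_coe, hcoe]; exact h1M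
  clear_value l
  clear hL hM hMcard hMsum hMmem h1M hsum hone hf h
  rcases l with _ | ⟨d1, _ | ⟨d2, _ | ⟨d3, _ | ⟨d4, _ | ⟨d5, _ | ⟨d6, t⟩⟩⟩⟩⟩⟩ <;>
    simp only [List.length] at hlen <;> try omega
  -- extract facts
  simp only [List.pairwise_cons, List.mem_cons, List.not_mem_nil, or_false,
    List.mem_singleton, forall_eq_or_imp, forall_eq] at hsorted hlmem h1l
  obtain ⟨⟨h12, h13, h14, h15⟩, ⟨h23, h24, h25⟩, ⟨h34, h35⟩, h45, -⟩ := hsorted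
  obtain ⟨⟨hd1d, hd1p⟩, ⟨hd2d, hd2p⟩, ⟨hd3d, hd3p⟩, ⟨hd4d, hd4p⟩, ⟨hd5d, hd5p⟩⟩ := hlmem
  simp only [List.sum_cons, List.sum_nil, add_zero] at hlsum
  have hd1 : d1 = 1 := by omega
  subst hd1
  -- set up unit fractions
  have hnlb : 5 ≤ Nat.card G := by omega
  refine ⟨hnlb, ?_⟩
  have hd5n : d5 ≤ Nat.card G := Nat.le_of_dvd hn0 hd5d
  have h5 : Nat.card G / d5 * d5 = Nat.card G := Nat.div_mul_cancel hd5d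
  have h4 : Nat.card G / d4 * d4 = Nat.card G := Nat.div_mul_cancel hd4d
  have h3 : Nat.card G / d3 * d3 = Nat.card G := Nat.div_mul_cancel hd3d
  have h2 : Nat.card G / d2 * d2 = Nat.card G := Nat.div_mul_cancel hd2d
  have ha : 1 ≤ Nat.card G / d5 := Nat.div_pos hd5n (by omega)
  have hab : Nat.card G / d5 ≤ Nat.card G / d4 := Nat.div_le_div_left h45 (by omega)
  have hbc : Nat.card G / d4 ≤ Nat.card G / d3 := Nat.div_le_div_left h34 (by omega)
  have hcd : Nat.card G / d3 ≤ Nat.card G / d2 := Nat.div_le_div_left h23 (by omega)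
  have hde : Nat.card G / d2 ≤ Nat.card G := Nat.div_le_self _ _
  refine lemA (Nat.card G / d5) (Nat.card G / d4) (Nat.card G / d3) (Nat.card G / d2)
    (Nat.card G) ha hab hbc hcd hde ?_
  -- verify the product identity over ℤ
  have hzsum : (1 : ℤ) + (d2 + (d3 + (d4 + d5))) = Nat.card G := by exact_mod_cast hlsum
  have hz5 : ((Nat.card G / d5 : ℕ) : ℤ) * d5 = Nat.card G := by exact_mod_cast h5
  have hz4 : ((Nat.card G / d4 : ℕ) : ℤ) * d4 = Nat.card G := by exact_mod_cast h4
  have hz3 : ((Nat.card G / d3 : ℕ) : ℤ) * d3 = Nat.card G := by exact_mod_cast h3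
  have hz2 : ((Nat.card G / d2 : ℕ) : ℤ) * d2 = Nat.card G := by exact_mod_cast h2
  have key : ((Nat.card G / d4 : ℕ) : ℤ) * (Nat.card G / d3 : ℕ) * (Nat.card G / d2 : ℕ) *
        (Nat.card G : ℕ) +
      ((Nat.card G / d5 : ℕ) : ℤ) * (Nat.card G / d3 : ℕ) * (Nat.card G / d2 : ℕ) *
        (Nat.card G : ℕ) +
      ((Nat.card G / d5 : ℕ) : ℤ) * (Nat.card G / d4 : ℕ) * (Nat.card G / d2 : ℕ) *
        (Nat.card G : ℕ) +
      ((Nat.card G / d5 : ℕ) : ℤ) * (Nat.card G / d4 : ℕ) * (Nat.card G / d3 : ℕ) *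
        (Nat.card G : ℕ) +
      ((Nat.card G / d5 : ℕ) : ℤ) * (Nat.card G / d4 : ℕ) * (Nat.card G / d3 : ℕ) *
        (Nat.card G / d2 : ℕ) =
      ((Nat.card G / d5 : ℕ) : ℤ) * (Nat.card G / d4 : ℕ) * (Nat.card G / d3 : ℕ) *
        (Nat.card G / d2 : ℕ) * (Nat.card G : ℕ) := by
    linear_combination (((Nat.card G / d5 : ℕ) : ℤ) * (Nat.card G / d4 : ℕ) *
        (Nat.card G / d3 : ℕ) * (Nat.card G / d2 : ℕ)) * hzsum -
      (((Nat.card G / d5 : ℕ) : ℤ) * (Nat.card G / d4 : ℕ) * (Nat.card G / d3 : ℕ)) * hz2 -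
      (((Nat.card G / d5 : ℕ) : ℤ) * (Nat.card G / d4 : ℕ) * (Nat.card G / d2 : ℕ)) * hz3 -
      (((Nat.card G / d5 : ℕ) : ℤ) * (Nat.card G / d3 : ℕ) * (Nat.card G / d2 : ℕ)) * hz4 -
      (((Nat.card G / d4 : ℕ) : ℤ) * (Nat.card G / d3 : ℕ) * (Nat.card G / d2 : ℕ)) * hz5
  exact_mod_cast key
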